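/- There exist absolute constants κ, λ > 0 such that: if X is a random variable with E X² = 1 and subgaussian norm at most L (L ≥ 1), g ∼ N(0,1), and ξ, ξ′ are Rademacher variables independent of X and g, then for all t > 0, P(|ξ(X² − 1)| > t) ≤ κ · P(λ L² |ξ′(g² − 1)| > t). -/

import Mathlib

open MeasureTheory ProbabilityTheory

lemma ae_abs_eq_one {Ω : Type} [MeasurableSpace Ω] (μ : Measure Ω) [IsProbabilityMeasure μ]
    (ξ : Ω → ℝ) (hξ : Measurable ξ) (h1 : μ (ξ ⁻¹' {1}) = 1/2) (h2 : μ (ξ ⁻¹' {-1}) = 1/2) :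
    ∀ᵐ ω ∂μ, |ξ ω| = 1 := by
  have hd : Disjoint (ξ ⁻¹' {1}) (ξ ⁻¹' {-1}) := by
    refine Set.disjoint_left.2 fun ω hω hω' => ?_
    simp only [Set.mem_preimage, Set.mem_singleton_iff] at hω hω'
    rw [hω] at hω'; norm_num at hω'
  have hAB : μ (ξ ⁻¹' {1} ∪ ξ ⁻¹' {-1}) = 1 := by
    rw [measure_union hd (hξ (measurableSet_singleton _)), h1, h2, ENNReal.add_halves]
  have hc : μ ((ξ ⁻¹' {1} ∪ ξ ⁻¹' {-1})ᶜ) = 0 := by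
    rw [measure_compl ((hξ (measurableSet_singleton _)).union (hξ (measurableSet_singleton _)))
      (measure_ne_top _ _), hAB, measure_univ, tsub_self]
  rw [MeasureTheory.ae_iff]
  refine measure_mono_null (fun ω hω => ?_) hc
  simp only [Set.mem_compl_iff, Set.mem_union, Set.mem_preimage, Set.mem_singleton_iff]
  rintro (h | h) <;> simp_all

lemma gauss_lb (u : ℝ) (hu : 0 ≤ u) :
    ENNReal.ofReal (Real.exp (-2 - u) / Real.sqrt (2 * Real.pi)) ≤
      gaussianReal 0 1 {x : ℝ | u < |x ^ 2 - 1|} := by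
  set s := Real.sqrt (1 + u) with hs
  have hs2 : s ^ 2 = 1 + u := Real.sq_sqrt (by linarith)
  have hs1 : 1 ≤ s := by nlinarith [Real.sqrt_nonneg (1 + u)]
  have hsub : Set.Ioc s (s + 1) ⊆ {x : ℝ | u < |x ^ 2 - 1|} := by
    rintro x ⟨hx1, hx2⟩
    have hx0 : 0 < x := by linarith
    have : s ^ 2 < x ^ 2 := by nlinarith
    have h1 : u < x ^ 2 - 1 := by nlinarith
    simp only [Set.mem_setOf_eq]
    calc u < x ^ 2 - 1 := h1
    _ ≤ |x ^ 2 - 1| := le_abs_self _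
  refine le_trans ?_ (measure_mono hsub)
  rw [gaussianReal_apply 0 one_ne_zero]
  have hpt : ∀ x ∈ Set.Ioc s (s + 1),
      ENNReal.ofReal (Real.exp (-2 - u) / Real.sqrt (2 * Real.pi)) ≤ gaussianPDF 0 1 x := by
    rintro x ⟨hx1, hx2⟩
    have hx0 : 0 < x := by linarith
    have hxsq : x ^ 2 ≤ (s + 1) ^ 2 := by nlinarith
    have hexp : Real.exp (-2 - u) ≤ Real.exp (-(x ^ 2) / 2) := by
      apply Real.exp_le_exp.2
      nlinarith
    rw [gaussianPDF]
    apply ENNReal.ofReal_le_ofReal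
    have hpdf : gaussianPDFReal 0 1 x = Real.exp (-(x ^ 2) / 2) / Real.sqrt (2 * Real.pi) := by
      rw [gaussianPDFReal]
      push_cast
      rw [sub_zero, mul_one, mul_one]
      ring
    rw [hpdf]
    gcongr
  calc ENNReal.ofReal (Real.exp (-2 - u) / Real.sqrt (2 * Real.pi))
      = ENNReal.ofReal (Real.exp (-2 - u) / Real.sqrt (2 * Real.pi)) *
        volume (Set.Ioc s (s + 1)) := by
        rw [Real.volume_Ioc]; norm_num
  _ = ∫⁻ _ in Set.Ioc s (s + 1), ENNReal.ofReal (Real.exp (-2 - u) / Real.sqrt (2 * Real.pi)) := by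
        rw [setLIntegral_const]
  _ ≤ ∫⁻ x in Set.Ioc s (s + 1), gaussianPDF 0 1 x :=
        setLIntegral_mono (measurable_gaussianPDF 0 1) hpt

lemma subg_tail {Ω : Type} [MeasurableSpace Ω] (μ : Measure Ω) [IsProbabilityMeasure μ]
    (X : Ω → ℝ) (L : ℝ) (hL : 1 ≤ L) (hX : Measurable X)
    (hmom : ∀ p : ℝ, 1 ≤ p → (∫⁻ ω, ENNReal.ofReal (|X ω| ^ p) ∂μ) ≤
      ENNReal.ofReal ((L * Real.sqrt p) ^ p))
    (t : ℝ) (ht : 2 * L ^ 2 < t) :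
    μ {ω | t < |X ω ^ 2 - 1|} ≤
      ENNReal.ofReal (Real.exp (-((1 + t) * Real.log 2 / (4 * L ^ 2)))) := by
  have hL0 : (0 : ℝ) < L := lt_of_lt_of_le one_pos hL
  have ht1 : (1 : ℝ) < t := by nlinarith
  set p : ℝ := (1 + t) / (2 * L ^ 2) with hp
  have hp1 : 1 ≤ p := by rw [hp, le_div_iff₀ (by positivity)]; nlinarith
  have hp0 : 0 < p := by linarith
  set s : ℝ := Real.sqrt (1 + t) with hsdef
  have hs0 : 0 < s := Real.sqrt_pos.2 (by linarith)
  have hsub : {ω | t < |X ω ^ 2 - 1|} ⊆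
      {ω | ENNReal.ofReal (s ^ p) ≤ ENNReal.ofReal (|X ω| ^ p)} := by
    intro ω hω
    simp only [Set.mem_setOf_eq] at hω ⊢
    have hXsq : 1 + t < X ω ^ 2 := by
      rcases lt_abs.1 hω with h | h
      · linarith
      · nlinarith [sq_nonneg (X ω)]
    have habs : s < |X ω| := by
      rw [hsdef, show |X ω| = Real.sqrt (X ω ^ 2) from (Real.sqrt_sq_eq_abs _).symm]
      exact Real.sqrt_lt_sqrt (by linarith) hXsq
    exact ENNReal.ofReal_le_ofReal
      (Real.rpow_le_rpow hs0.le habs.le hp0.le)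
  have hmarkov : ENNReal.ofReal (s ^ p) * μ {ω | ENNReal.ofReal (s ^ p) ≤
      ENNReal.ofReal (|X ω| ^ p)} ≤ ∫⁻ ω, ENNReal.ofReal (|X ω| ^ p) ∂μ :=
    mul_meas_ge_le_lintegral₀ (((Real.continuous_rpow_const hp0.le).measurable.comp hX.abs).ennreal_ofReal.aemeasurable) _
  have hsp0 : 0 < s ^ p := Real.rpow_pos_of_pos hs0 p
  have key : μ {ω | t < |X ω ^ 2 - 1|} ≤
      ENNReal.ofReal ((L * Real.sqrt p) ^ p / s ^ p) := by
    rw [ENNReal.ofReal_div_of_pos hsp0]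
    rw [ENNReal.le_div_iff_mul_le (Or.inl (ENNReal.ofReal_pos.2 hsp0).ne')
      (Or.inl ENNReal.ofReal_ne_top)]
    calc μ {ω | t < |X ω ^ 2 - 1|} * ENNReal.ofReal (s ^ p)
        ≤ μ {ω | ENNReal.ofReal (s ^ p) ≤ ENNReal.ofReal (|X ω| ^ p)} *
          ENNReal.ofReal (s ^ p) := by gcongr <;> exact measure_mono hsub
    _ = ENNReal.ofReal (s ^ p) * μ {ω | ENNReal.ofReal (s ^ p) ≤
          ENNReal.ofReal (|X ω| ^ p)} := mul_comm _ _
    _ ≤ ∫⁻ ω, ENNReal.ofReal (|X ω| ^ p) ∂μ := hmarkov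
    _ ≤ ENNReal.ofReal ((L * Real.sqrt p) ^ p) := hmom p hp1
  refine key.trans (le_of_eq ?_)
  congr 1
  have hLp : L * Real.sqrt p = s / Real.sqrt 2 := by
    have h1 : 0 ≤ L * Real.sqrt p := by positivity
    have h2 : 0 ≤ s / Real.sqrt 2 := by positivity
    have hsq : (L * Real.sqrt p) ^ 2 = (s / Real.sqrt 2) ^ 2 := by
      rw [mul_pow, div_pow, Real.sq_sqrt hp0.le, hsdef, Real.sq_sqrt (by linarith : (0:ℝ) ≤ 1 + t),
        Real.sq_sqrt (by norm_num : (0:ℝ) ≤ 2), hp]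
      field_simp
    nlinarith
  rw [← Real.div_rpow (by positivity) hs0.le, hLp]
  have hss : s / Real.sqrt 2 / s = 1 / Real.sqrt 2 := by
    field_simp
  rw [hss, Real.rpow_def_of_pos (by positivity)]
  congr 1
  rw [Real.log_div one_ne_zero (by positivity), Real.log_one, Real.log_sqrt (by norm_num), hp]
  field_simp
  ring


/-- Strong stochastic domination of a centered squared subgaussian variable
by a centered squared Gaussian. -/
theorem subgauss_dominance :
    ∃ κ : ℝ, 0 < κ ∧ ∃ lam : ℝ, 0 < lam ∧
      ∀ (Ω : Type) [MeasurableSpace Ω] (μ : Measure Ω) [IsProbabilityMeasure μ]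
        (X ξ : Ω → ℝ) (L : ℝ), 1 ≤ L →
        Measurable X → Measurable ξ →
        (∫ ω, X ω ^ 2 ∂μ) = 1 →
        (∀ p : ℝ, 1 ≤ p →
          (∫⁻ ω, ENNReal.ofReal (|X ω| ^ p) ∂μ) ≤
            ENNReal.ofReal ((L * Real.sqrt p) ^ p)) →
        μ (ξ ⁻¹' {1}) = 1 / 2 → μ (ξ ⁻¹' {-1}) = 1 / 2 →
        IndepFun ξ X μ →
        ∀ (Ω' : Type) [MeasurableSpace Ω'] (ν : Measure Ω') [IsProbabilityMeasure ν]
          (g ξ' : Ω' → ℝ),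
          Measurable g → Measurable ξ' →
          Measure.map g ν = gaussianReal 0 1 →
          ν (ξ' ⁻¹' {1}) = 1 / 2 → ν (ξ' ⁻¹' {-1}) = 1 / 2 →
          IndepFun ξ' g ν →
          ∀ t : ℝ, 0 < t →
            μ {ω | t < |ξ ω * (X ω ^ 2 - 1)|} ≤
              ENNReal.ofReal κ * ν {ω | t < lam * L ^ 2 * |ξ' ω * (g ω ^ 2 - 1)|} := by
  refine ⟨100, by norm_num, 12, by norm_num, ?_⟩
  intro Ω _ μ _ X ξ L hL hX hξ _ hmom hξ1 hξ2 _ Ω' _ ν _ g ξ' hg hξ' hgmap hξ'1 hξ'2 _ t ht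
  have hL0 : (0 : ℝ) < L := lt_of_lt_of_le one_pos hL
  have hL2 : (0 : ℝ) < 12 * L ^ 2 := by positivity
  set u : ℝ := t / (12 * L ^ 2) with hu
  have hu0 : 0 < u := by positivity
  -- step 1 : remove ξ on the left
  have hS : μ {ω | t < |ξ ω * (X ω ^ 2 - 1)|} = μ {ω | t < |X ω ^ 2 - 1|} := by
    apply measure_congr
    filter_upwards [ae_abs_eq_one μ ξ hξ hξ1 hξ2] with ω hω
    refine eq_iff_iff.2 ?_
    show (t < |ξ ω * (X ω ^ 2 - 1)|) ↔ (t < |X ω ^ 2 - 1|)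
    rw [abs_mul, hω, one_mul]
  -- step 1' : remove ξ' on the right
  have hT : ν {ω | t < 12 * L ^ 2 * |ξ' ω * (g ω ^ 2 - 1)|} =
      ν {ω | t < 12 * L ^ 2 * |g ω ^ 2 - 1|} := by
    apply measure_congr
    filter_upwards [ae_abs_eq_one ν ξ' hξ' hξ'1 hξ'2] with ω hω
    refine eq_iff_iff.2 ?_
    show (t < 12 * L ^ 2 * |ξ' ω * (g ω ^ 2 - 1)|) ↔ (t < 12 * L ^ 2 * |g ω ^ 2 - 1|)
    rw [abs_mul, hω, one_mul]
  -- step 2 : express the right-hand side with the Gaussian measure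
  have hset : {ω | t < 12 * L ^ 2 * |g ω ^ 2 - 1|} = g ⁻¹' {x : ℝ | u < |x ^ 2 - 1|} := by
    ext ω
    simp only [Set.mem_setOf_eq, Set.mem_preimage, hu]
    rw [div_lt_iff₀ hL2]
    constructor <;> intro h <;> linarith
  have hmeasset : MeasurableSet {x : ℝ | u < |x ^ 2 - 1|} := by
    apply measurableSet_lt measurable_const
    exact ((measurable_id.pow_const 2).sub_const 1).abs
  have hG : ν {ω | t < 12 * L ^ 2 * |g ω ^ 2 - 1|} =
      gaussianReal 0 1 {x : ℝ | u < |x ^ 2 - 1|} := by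
    rw [hset, ← hgmap, Measure.map_apply hg hmeasset]
  -- gaussian lower bound
  have hglb : ENNReal.ofReal (Real.exp (-2 - u) / Real.sqrt (2 * Real.pi)) ≤
      ν {ω | t < 12 * L ^ 2 * |g ω ^ 2 - 1|} := by
    rw [hG]; exact gauss_lb u hu0.le
  -- numeric facts
  have hpi : Real.sqrt (2 * Real.pi) ≤ 2.52 := by
    rw [show (2.52 : ℝ) = Real.sqrt (2.52 ^ 2) from (Real.sqrt_sq (by norm_num)).symm]
    exact Real.sqrt_le_sqrt (by nlinarith [Real.pi_lt_d2])
  have hpi0 : 0 < Real.sqrt (2 * Real.pi) := Real.sqrt_pos.2 (by positivity)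
  have he1 : Real.exp 1 < 2.7182818286 := Real.exp_one_lt_d9
  have he0 : 0 < Real.exp 1 := Real.exp_pos 1
  rw [hS, hT]
  by_cases hcase : t ≤ 2 * L ^ 2
  · -- small t : bound left side by 1
    have hu6 : u ≤ 1 / 6 := by
      rw [hu, div_le_iff₀ hL2]; nlinarith
    have hnum : (1 : ℝ) ≤ 100 * (Real.exp (-2 - u) / Real.sqrt (2 * Real.pi)) := by
      have h3 : Real.exp (-3 : ℝ) ≤ Real.exp (-2 - u) := Real.exp_le_exp.2 (by linarith)
      have hexp3 : Real.exp (3 : ℝ) = Real.exp 1 ^ 3 := by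
        rw [show (3 : ℝ) = (3 : ℕ) * 1 by norm_num, Real.exp_nat_mul]
      have h3' : Real.exp (-3 : ℝ) = (Real.exp 1 ^ 3)⁻¹ := by
        rw [Real.exp_neg, hexp3]
      have hsq' : Real.exp 1 ^ 2 < 2.7182818286 ^ 2 := by nlinarith
      have hcube : Real.exp 1 ^ 3 < 20.09 := by nlinarith
      have h3pos : 0 < Real.exp 1 ^ 3 := by positivity
      have hinv : (20.09 : ℝ)⁻¹ < Real.exp (-3 : ℝ) := by
        rw [h3']
        exact inv_strictAnti₀ h3pos hcube
      calc (1 : ℝ) ≤ 100 * ((20.09 : ℝ)⁻¹ / 2.52) := by norm_num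
      _ ≤ 100 * (Real.exp (-2 - u) / Real.sqrt (2 * Real.pi)) := by
          gcongr
          all_goals first
          | linarith
          | exact hpi
    calc μ {ω | t < |X ω ^ 2 - 1|} ≤ 1 := prob_le_one
    _ ≤ ENNReal.ofReal (100 * (Real.exp (-2 - u) / Real.sqrt (2 * Real.pi))) := by
        have h1 : (1 : ENNReal) = ENNReal.ofReal 1 := by simp
        rw [h1]
        exact ENNReal.ofReal_le_ofReal hnum
    _ = ENNReal.ofReal 100 * ENNReal.ofReal (Real.exp (-2 - u) / Real.sqrt (2 * Real.pi)) :=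
        ENNReal.ofReal_mul (by norm_num)
    _ ≤ ENNReal.ofReal 100 * ν {ω | t < 12 * L ^ 2 * |g ω ^ 2 - 1|} :=
        mul_le_mul_right hglb _
  · -- large t : subgaussian tail bound
    push_neg at hcase
    have htail := subg_tail μ X L hL hX hmom t hcase
    have hnum : Real.exp (-((1 + t) * Real.log 2 / (4 * L ^ 2))) ≤
        100 * (Real.exp (-2 - u) / Real.sqrt (2 * Real.pi)) := by
      have hlog : (0.6931471803 : ℝ) < Real.log 2 := Real.log_two_gt_d9
      have hmono : Real.exp (-((1 + t) * Real.log 2 / (4 * L ^ 2))) ≤ Real.exp (-u) := by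
        apply Real.exp_le_exp.2
        rw [neg_le_neg_iff, hu, div_le_div_iff₀ hL2 (by positivity)]
        have hLL : (0 : ℝ) < L ^ 2 := by positivity
        have hl0 : (0 : ℝ) < Real.log 2 := lt_trans (by norm_num) hlog
        nlinarith [mul_lt_mul_of_pos_right hlog (mul_pos ht hLL), mul_pos hl0 hLL]
      have hsplit : Real.exp (-2 - u) = Real.exp (-2 : ℝ) * Real.exp (-u) := by
        rw [← Real.exp_add]; ring_nf
      have hexp2 : Real.exp (2 : ℝ) = Real.exp 1 ^ 2 := by
        rw [show (2 : ℝ) = (2 : ℕ) * 1 by norm_num, Real.exp_nat_mul]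
      have hsq : Real.exp 1 ^ 2 < 7.39 := by nlinarith
      have h2pos : 0 < Real.exp 1 ^ 2 := by positivity
      have hinv : (7.39 : ℝ)⁻¹ < Real.exp (-2 : ℝ) := by
        rw [Real.exp_neg, hexp2]
        exact inv_strictAnti₀ h2pos hsq
      have hexpu : 0 < Real.exp (-u) := Real.exp_pos _
      have hone : (1 : ℝ) ≤ 100 * (Real.exp (-2 : ℝ) / Real.sqrt (2 * Real.pi)) := by
        calc (1 : ℝ) ≤ 100 * ((7.39 : ℝ)⁻¹ / 2.52) := by norm_num
        _ ≤ 100 * (Real.exp (-2 : ℝ) / Real.sqrt (2 * Real.pi)) := by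
            gcongr
            all_goals first
            | exact hinv.le
            | exact hpi
      calc Real.exp (-((1 + t) * Real.log 2 / (4 * L ^ 2))) ≤ Real.exp (-u) := hmono
      _ = 1 * Real.exp (-u) := (one_mul _).symm
      _ ≤ 100 * (Real.exp (-2 : ℝ) / Real.sqrt (2 * Real.pi)) * Real.exp (-u) :=
          mul_le_mul_of_nonneg_right hone hexpu.le
      _ = 100 * (Real.exp (-2 - u) / Real.sqrt (2 * Real.pi)) := by
          rw [hsplit]; ring
    calc μ {ω | t < |X ω ^ 2 - 1|}
        ≤ ENNReal.ofReal (Real.exp (-((1 + t) * Real.log 2 / (4 * L ^ 2)))) := htail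
    _ ≤ ENNReal.ofReal (100 * (Real.exp (-2 - u) / Real.sqrt (2 * Real.pi))) :=
        ENNReal.ofReal_le_ofReal hnum
    _ = ENNReal.ofReal 100 * ENNReal.ofReal (Real.exp (-2 - u) / Real.sqrt (2 * Real.pi)) :=
        ENNReal.ofReal_mul (by norm_num)
    _ ≤ ENNReal.ofReal 100 * ν {ω | t < 12 * L ^ 2 * |g ω ^ 2 - 1|} :=
        mul_le_mul_right hglb _
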